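/- For every continuous φ : ℤ_p → ℂ_p and all x, y ∈ ℤ_p, the identity I^x(σφ)(y) = I^{x+1}(φ)(y) + y·I^x(φ)(y−1) holds, where I^x(φ)(y) = ∑_{k=0}^∞ (-1)^k k! (y choose k)(x choose k) φ(x−k) and (σφ)(x) = φ(x+1). -/

import Mathlib

open Finset

/-- `(x choose k)` on `ℤ_p`, valued in a normed `ℚ_p`-algebra `K` (modelling `ℂ_p`). -/
noncomputable def padicBinom (p : ℕ) [Fact p.Prime] (K : Type*) [NormedField K]
    [NormedAlgebra ℚ_[p] K] (x : ℤ_[p]) (k : ℕ) : K :=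
  algebraMap ℚ_[p] K ((∏ i ∈ Finset.range k, ((x : ℚ_[p]) - (i : ℚ_[p]))) / (k.factorial : ℚ_[p]))

/-- The transform `I^x`, `I^x(φ)(y) = ∑_{k≥0} (-1)^k k! (y choose k)(x choose k) φ(x−k)`. -/
noncomputable def Iop (p : ℕ) [Fact p.Prime] {K : Type*} [NormedField K]
    [NormedAlgebra ℚ_[p] K] (x : ℤ_[p]) (φ : ℤ_[p] → K) (y : ℤ_[p]) : K :=
  ∑' k : ℕ,
    (-1 : K) ^ k * (k.factorial : K) * padicBinom p K y k * padicBinom p K x k * φ (x - (k : ℤ_[p]))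

section Aux

open Filter

variable (p : ℕ) [hp : Fact p.Prime]

private lemma descPoch_eval_eq_prod {R : Type*} [CommRing R] (x : R) (k : ℕ) :
    (descPochhammer R k).eval x = ∏ i ∈ range k, (x - i) := by
  induction k with
  | zero => simp
  | succ k ih => rw [descPochhammer_succ_eval, ih, prod_range_succ]

private lemma norm_prod_sub_le (x : ℤ_[p]) (k : ℕ) :
    ‖∏ i ∈ range k, ((x : ℚ_[p]) - (i : ℚ_[p]))‖ ≤ ‖(k.factorial : ℚ_[p])‖ := by
  have h1 : (((∏ i ∈ range k, (x - (i : ℤ_[p]))) : ℤ_[p]) : ℚ_[p])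
      = ∏ i ∈ range k, ((x : ℚ_[p]) - (i : ℚ_[p])) := by
    rw [show ((↑(∏ i ∈ range k, (x - (i : ℤ_[p]))) : ℚ_[p]))
        = PadicInt.Coe.ringHom (∏ i ∈ range k, (x - (i : ℤ_[p]))) from rfl, map_prod]
    exact Finset.prod_congr rfl fun i _ => by
      show ((x - (i : ℤ_[p]) : ℤ_[p]) : ℚ_[p]) = _
      push_cast
      ring
  have h2 : ((Nat.factorial k : ℤ_[p]) : ℚ_[p]) = (Nat.factorial k : ℚ_[p]) := by push_cast; ring
  rw [← h1, ← h2, ← PadicInt.norm_def, ← PadicInt.norm_def,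
    ← descPoch_eval_eq_prod, descPochhammer_eval_eq_ascPochhammer]
  exact PadicInt.norm_ascPochhammer_le k _

private lemma fact_ne_zero (k : ℕ) : (Nat.factorial k : ℚ_[p]) ≠ 0 := by
  exact_mod_cast k.factorial_ne_zero

private lemma norm_padicBinom_le_one {K : Type*} [NormedField K] [NormedAlgebra ℚ_[p] K]
    (x : ℤ_[p]) (k : ℕ) : ‖padicBinom p K x k‖ ≤ 1 := by
  rw [padicBinom, norm_algebraMap', norm_div, div_le_one
    (norm_pos_iff.mpr (fact_ne_zero p k))]
  exact norm_prod_sub_le p x k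

private lemma norm_factorial_tendsto :
    Tendsto (fun k : ℕ => ‖(k.factorial : ℚ_[p])‖) atTop (nhds 0) := by
  have hp1 : 1 < p := hp.out.one_lt
  have hbound : ∀ k : ℕ, ‖(k.factorial : ℚ_[p])‖ ≤ ((p : ℝ)⁻¹) ^ (k / p) := by
    intro k
    have hv : k / p ≤ padicValNat p (k.factorial) := by
      rcases lt_or_ge k p with h | h
      · simp [Nat.div_eq_of_lt h]
      · rw [padicValNat_factorial (Nat.lt_succ_self (Nat.log p k))]
        have hlg : 0 < Nat.log p k := Nat.log_pos hp1 h
        have h1 : 1 ∈ Finset.Ico 1 (Nat.log p k + 1) := by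
          rw [Finset.mem_Ico]
          omega
        calc k / p = k / p ^ 1 := by rw [pow_one]
          _ ≤ ∑ i ∈ Finset.Ico 1 (Nat.log p k + 1), k / p ^ i :=
            Finset.single_le_sum (f := fun i => k / p ^ i) (fun _ _ => Nat.zero_le _) h1
    have hdvd : p ^ (k / p) ∣ k.factorial :=
      dvd_trans (pow_dvd_pow p hv) pow_padicValNat_dvd
    obtain ⟨c, hc⟩ := hdvd
    have : (k.factorial : ℚ_[p]) = (p : ℚ_[p]) ^ (k / p) * (c : ℚ_[p]) := by
      rw [hc]; push_cast; ring
    rw [this, norm_mul, norm_pow, Padic.norm_p]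
    have hcle : ‖(c : ℚ_[p])‖ ≤ 1 := by
      have := Padic.norm_int_le_one (p := p) (c : ℤ)
      simpa using this
    calc ((p : ℝ)⁻¹) ^ (k / p) * ‖(c : ℚ_[p])‖ ≤ ((p : ℝ)⁻¹) ^ (k / p) * 1 := by
          gcongr
      _ = ((p : ℝ)⁻¹) ^ (k / p) := mul_one _
  have hdiv : Tendsto (fun k : ℕ => k / p) atTop atTop := by
    refine tendsto_atTop_atTop.2 fun b => ⟨b * p, fun a ha => ?_⟩
    exact (Nat.le_div_iff_mul_le hp.out.pos).2 ha
  have hpow : Tendsto (fun k : ℕ => ((p : ℝ)⁻¹) ^ (k / p)) atTop (nhds 0) := by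
    have h0 : (0 : ℝ) ≤ (p : ℝ)⁻¹ := by positivity
    have hlt : (p : ℝ)⁻¹ < 1 := by
      rw [inv_lt_one_iff₀]; right; exact_mod_cast hp1
    exact (tendsto_pow_atTop_nhds_zero_of_lt_one h0 hlt).comp hdiv
  exact squeeze_zero (fun k => norm_nonneg _) hbound hpow

private lemma fact_mul_padicBinom {K : Type*} [NormedField K] [NormedAlgebra ℚ_[p] K]
    (y : ℤ_[p]) (k : ℕ) :
    (k.factorial : K) * padicBinom p K y k
      = algebraMap ℚ_[p] K (∏ i ∈ range k, ((y : ℚ_[p]) - (i : ℚ_[p]))) := by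
  rw [padicBinom, ← map_natCast (algebraMap ℚ_[p] K) k.factorial, ← map_mul,
    mul_div_cancel₀ _ (fact_ne_zero p k)]

private lemma term_summable {K : Type*} [NontriviallyNormedField K] [NormedAlgebra ℚ_[p] K]
    [IsUltrametricDist K] [CompleteSpace K] (x y : ℤ_[p]) (φ : ℤ_[p] → K)
    (C : ℝ) (hC : ∀ t, ‖φ t‖ ≤ C) :
    Summable (fun k : ℕ => (-1 : K) ^ k * (k.factorial : K) * padicBinom p K y k *
      padicBinom p K x k * φ (x - (k : ℤ_[p]))) := by
  have hC0 : 0 ≤ C := le_trans (norm_nonneg _) (hC 0)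
  apply NonarchimedeanAddGroup.summable_of_tendsto_cofinite_zero
  rw [Nat.cofinite_eq_atTop]
  have key : ∀ k : ℕ, ‖(-1 : K) ^ k * (k.factorial : K) * padicBinom p K y k *
      padicBinom p K x k * φ (x - (k : ℤ_[p]))‖ ≤ ‖(k.factorial : ℚ_[p])‖ * C := by
    intro k
    have h2 : (-1 : K) ^ k * (k.factorial : K) * padicBinom p K y k *
        padicBinom p K x k * φ (x - (k : ℤ_[p]))
        = (-1 : K) ^ k * (algebraMap ℚ_[p] K (∏ i ∈ range k, ((y : ℚ_[p]) - (i : ℚ_[p]))) *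
          (padicBinom p K x k * φ (x - (k : ℤ_[p])))) := by
      rw [← fact_mul_padicBinom]; ring
    rw [h2, norm_mul, norm_mul, norm_mul, norm_pow, norm_neg, norm_one, one_pow, one_mul,
      norm_algebraMap']
    calc ‖∏ i ∈ range k, ((y : ℚ_[p]) - (i : ℚ_[p]))‖ * (‖padicBinom p K x k‖ * ‖φ (x - (k : ℤ_[p]))‖)
        ≤ ‖(k.factorial : ℚ_[p])‖ * (1 * C) := by
          gcongr
          · exact norm_prod_sub_le p y k
          · exact norm_padicBinom_le_one p x k
          · exact hC _
      _ = ‖(k.factorial : ℚ_[p])‖ * C := by rw [one_mul]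
  have hlim : Tendsto (fun k : ℕ => ‖(k.factorial : ℚ_[p])‖ * C) atTop (nhds 0) := by
    simpa using (norm_factorial_tendsto p).mul_const C
  exact squeeze_zero_norm key hlim

private lemma padicBinom_zero {K : Type*} [NormedField K] [NormedAlgebra ℚ_[p] K]
    (x : ℤ_[p]) : padicBinom p K x 0 = 1 := by
  simp [padicBinom]

private lemma padicBinom_pascal {K : Type*} [NormedField K] [NormedAlgebra ℚ_[p] K]
    (x : ℤ_[p]) (k : ℕ) :
    padicBinom p K (x + 1) (k + 1) = padicBinom p K x (k + 1) + padicBinom p K x k := by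
  rw [padicBinom, padicBinom, padicBinom, ← map_add]
  congr 1
  have hk : (Nat.factorial k : ℚ_[p]) ≠ 0 := fact_ne_zero p k
  have hk1 : (Nat.factorial (k + 1) : ℚ_[p]) ≠ 0 := fact_ne_zero p (k + 1)
  have e1 : ∏ i ∈ range (k + 1), (((x + 1 : ℤ_[p]) : ℚ_[p]) - (i : ℚ_[p]))
      = ((x : ℚ_[p]) + 1) * ∏ i ∈ range k, ((x : ℚ_[p]) - (i : ℚ_[p])) := by
    rw [prod_range_succ']
    have hprod : ∏ i ∈ range k, (((x + 1 : ℤ_[p]) : ℚ_[p]) - ((i + 1 : ℕ) : ℚ_[p]))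
        = ∏ i ∈ range k, ((x : ℚ_[p]) - (i : ℚ_[p])) :=
      Finset.prod_congr rfl fun i _ => by push_cast; ring
    rw [hprod]
    push_cast
    ring
  have e2 : ∏ i ∈ range (k + 1), ((x : ℚ_[p]) - (i : ℚ_[p]))
      = (∏ i ∈ range k, ((x : ℚ_[p]) - (i : ℚ_[p]))) * ((x : ℚ_[p]) - (k : ℚ_[p])) :=
    prod_range_succ _ _
  rw [e1, e2, Nat.factorial_succ]
  have hkk : ((k : ℚ_[p]) + 1) ≠ 0 := by
    have : ((k + 1 : ℕ) : ℚ_[p]) ≠ 0 := Nat.cast_ne_zero.2 (Nat.succ_ne_zero k)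
    push_cast at this; exact this
  field_simp
  push_cast
  ring

private lemma padicBinom_absorb {K : Type*} [NormedField K] [NormedAlgebra ℚ_[p] K]
    (y : ℤ_[p]) (k : ℕ) :
    ((k + 1).factorial : K) * padicBinom p K y (k + 1)
      = algebraMap ℚ_[p] K (y : ℚ_[p]) * ((k.factorial : K) * padicBinom p K (y - 1) k) := by
  rw [fact_mul_padicBinom, fact_mul_padicBinom, ← map_mul]
  congr 1
  rw [prod_range_succ']
  have hprod : ∏ i ∈ range k, ((y : ℚ_[p]) - ((i + 1 : ℕ) : ℚ_[p]))
      = ∏ i ∈ range k, (((y - 1 : ℤ_[p]) : ℚ_[p]) - (i : ℚ_[p])) :=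
    Finset.prod_congr rfl fun i _ => by push_cast; ring
  rw [hprod]
  push_cast
  ring

end Aux

/-- For continuous `φ : ℤ_p → ℂ_p` and all `x, y ∈ ℤ_p`,
`I^x(σφ)(y) = I^{x+1}(φ)(y) + y·I^x(φ)(y−1)`, where `(σφ)(x) = φ(x+1)`. -/
theorem Iop_shift (p : ℕ) [Fact p.Prime] (K : Type*) [NontriviallyNormedField K]
    [NormedAlgebra ℚ_[p] K] [IsUltrametricDist K] [CompleteSpace K]
    (φ : ℤ_[p] → K) (hφ : Continuous φ) (x y : ℤ_[p]) :
    Iop p x (fun t => φ (t + 1)) y =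
      Iop p (x + 1) φ y + algebraMap ℚ_[p] K (y : ℚ_[p]) * Iop p x φ (y - 1) := by
  obtain ⟨C, hC⟩ := isCompact_univ.exists_bound_of_continuousOn hφ.continuousOn
  have hC' : ∀ t, ‖φ t‖ ≤ C := fun t => hC t (Set.mem_univ t)
  set yK : K := algebraMap ℚ_[p] K (y : ℚ_[p]) with hyK
  set f : ℕ → K := fun k => (-1 : K) ^ k * (k.factorial : K) * padicBinom p K y k *
      padicBinom p K x k * (fun t => φ (t + 1)) (x - (k : ℤ_[p])) with hfdef
  set g : ℕ → K := fun k => (-1 : K) ^ k * (k.factorial : K) * padicBinom p K y k *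
      padicBinom p K (x + 1) k * φ ((x + 1) - (k : ℤ_[p])) with hgdef
  set h : ℕ → K := fun k => (-1 : K) ^ k * (k.factorial : K) * padicBinom p K (y - 1) k *
      padicBinom p K x k * φ (x - (k : ℤ_[p])) with hhdef
  have hf : Summable f := term_summable p x y (fun t => φ (t + 1)) C (fun t => hC' _)
  have hg : Summable g := term_summable p (x + 1) y φ C hC'
  have hd : Summable (fun k => f k - g k) := hf.sub hg
  have e0 : f 0 - g 0 = 0 := by
    simp [hfdef, hgdef, padicBinom_zero]
  have es : ∀ k : ℕ, f (k + 1) - g (k + 1) = yK * h k := by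
    intro k
    have harg1 : x - ((k + 1 : ℕ) : ℤ_[p]) + 1 = x - (k : ℤ_[p]) := by push_cast; ring
    have harg2 : (x + 1) - ((k + 1 : ℕ) : ℤ_[p]) = x - (k : ℤ_[p]) := by push_cast; ring
    have hy := padicBinom_absorb p (K := K) y k
    simp only [hfdef, hgdef, hhdef]
    rw [harg1, harg2, padicBinom_pascal]
    rw [hyK]
    linear_combination ((-1 : K) ^ k * padicBinom p K x k * φ (x - (k : ℤ_[p]))) * hy
  have step1 : Iop p x (fun t => φ (t + 1)) y = ∑' k, g k + ∑' k, (f k - g k) := by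
    have := Summable.tsum_sub hf hg
    rw [Iop]
    show ∑' k, f k = _
    rw [this]
    ring
  have step2 : ∑' k, (f k - g k) = yK * ∑' k, h k := by
    rw [Summable.tsum_eq_zero_add hd, e0, zero_add]
    calc ∑' k, (f (k + 1) - g (k + 1)) = ∑' k, yK * h k := tsum_congr es
      _ = yK * ∑' k, h k := tsum_mul_left
  rw [step1, step2]
  rfl
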